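/- Let d be even, and let z₁, z₂, … be i.i.d. 2-dimensional Gaussian vectors zᵢ ~ N(0, (σ̄²/d)I₂). Define d-dimensional vectors wᵢ by w_{i,j} = z_{i,1} for j odd and w_{i,j} = z_{i,2} for j even, and let y_k = (1/(k+1))∑_{i=1}^{k} wᵢ (taking x₀ = 0). Then for every k ≥ 1 and every δ ∈ (0,1): P( σ̄√(k·log(1/δ))/(k+1) ≥ ‖y_k‖₂ ) ≤ 1 − δ. Equivalently, P(‖y_k‖₂ > σ̄√(k log(1/δ))/(k+1)) ≥ δ. -/

import Mathlib

open MeasureTheory ProbabilityTheory Finset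

section AuxAveragedGaussian

open Real Set
open scoped ENNReal NNReal

private lemma agauss_prod_eq {a b : ℝ≥0} (ha : a ≠ 0) (hb : b ≠ 0) :
    (gaussianReal 0 a).prod (gaussianReal 0 b)
      = (volume.prod volume).withDensity
        (fun z : ℝ × ℝ => gaussianPDF 0 a z.1 * gaussianPDF 0 b z.2) :=
  Measure.prod_eq fun s t hs ht => by
    rw [withDensity_apply _ (hs.prod ht), ← Measure.prod_restrict,
      lintegral_prod_mul (measurable_gaussianPDF 0 a).aemeasurable
        (measurable_gaussianPDF 0 b).aemeasurable,
      gaussianReal_of_var_ne_zero _ ha, gaussianReal_of_var_ne_zero _ hb,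
      withDensity_apply _ hs, withDensity_apply _ ht]

private lemma agauss_pdf_conv {a b : ℝ≥0} (ha : a ≠ 0) (hb : b ≠ 0) (u : ℝ) :
    (∫ t : ℝ, gaussianPDFReal 0 a (u - t) * gaussianPDFReal 0 b t)
      = gaussianPDFReal 0 (a + b) u := by
  have hA : (0:ℝ) < a := NNReal.coe_pos.mpr (pos_iff_ne_zero.mpr ha)
  have hB : (0:ℝ) < b := NNReal.coe_pos.mpr (pos_iff_ne_zero.mpr hb)
  set A := (a:ℝ) with hA'
  set B := (b:ℝ) with hB'
  have hAB : 0 < A + B := by linarith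
  have hpi : (0:ℝ) < π := Real.pi_pos
  have key : ∀ t : ℝ, gaussianPDFReal 0 a (u - t) * gaussianPDFReal 0 b t
      = ((√(2*π*A))⁻¹ * (√(2*π*B))⁻¹ * rexp (-u^2/(2*(A+B)))) *
        rexp (-((A+B)/(2*A*B)) * (t - B*u/(A+B))^2) := by
    intro t
    simp only [gaussianPDFReal, sub_zero]
    have hexp : rexp (-(u-t)^2/(2*A)) * rexp (-t^2/(2*B))
        = rexp (-u^2/(2*(A+B))) * rexp (-((A+B)/(2*A*B)) * (t - B*u/(A+B))^2) := by
      rw [← Real.exp_add, ← Real.exp_add]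
      congr 1
      field_simp
      ring
    calc (√(2*π*A))⁻¹ * rexp (-(u-t)^2/(2*A)) * ((√(2*π*B))⁻¹ * rexp (-t^2/(2*B)))
        = (√(2*π*A))⁻¹ * (√(2*π*B))⁻¹ * (rexp (-(u-t)^2/(2*A)) * rexp (-t^2/(2*B))) := by ring
      _ = _ := by rw [hexp]; ring
  rw [integral_congr_ae (Filter.Eventually.of_forall key), integral_const_mul,
    integral_sub_right_eq_self (fun t => rexp (-((A+B)/(2*A*B)) * t^2)) (B*u/(A+B)),
    integral_gaussian]
  have hcoef : (√(2*π*A))⁻¹ * (√(2*π*B))⁻¹ * √(π/((A+B)/(2*A*B))) = (√(2*π*(A+B)))⁻¹ := by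
    rw [← Real.sqrt_inv, ← Real.sqrt_inv, ← Real.sqrt_inv,
      ← Real.sqrt_mul (by positivity), ← Real.sqrt_mul (by positivity)]
    congr 1
    field_simp
  have : ((a + b : ℝ≥0) : ℝ) = A + B := by push_cast; rfl
  simp only [gaussianPDFReal, sub_zero, this]
  calc (√(2*π*A))⁻¹ * (√(2*π*B))⁻¹ * rexp (-u^2/(2*(A+B))) * √(π/((A+B)/(2*A*B)))
      = ((√(2*π*A))⁻¹ * (√(2*π*B))⁻¹ * √(π/((A+B)/(2*A*B)))) * rexp (-u^2/(2*(A+B))) := by ring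
    _ = _ := by rw [hcoef]

private lemma agauss_integrable_conv {a b : ℝ≥0} (x : ℝ) :
    Integrable (fun t => gaussianPDFReal 0 a (x - t) * gaussianPDFReal 0 b t) := by
  refine Integrable.bdd_mul (c := (√(2*π*a))⁻¹) ?_ ?_ (Filter.Eventually.of_forall fun t => ?_)
  · exact integrable_gaussianPDFReal 0 b
  · exact ((measurable_gaussianPDFReal 0 a).comp
      (measurable_const.sub measurable_id)).aestronglyMeasurable
  · rw [Real.norm_eq_abs, abs_of_nonneg (gaussianPDFReal_nonneg _ _ _)]
    unfold gaussianPDFReal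
    have h1 : rexp (-(x - t - 0)^2/(2*(a:ℝ))) ≤ 1 := by
      rw [Real.exp_le_one_iff]
      have : (0:ℝ) ≤ (x - t - 0)^2 := sq_nonneg _
      have h2 : (0:ℝ) ≤ 2*(a:ℝ) := by positivity
      rcases h2.eq_or_lt with h|h
      · rw [← h]; simp
      · exact div_nonpos_of_nonpos_of_nonneg (by linarith) (le_of_lt h)
    calc (√(2*π*(a:ℝ)))⁻¹ * rexp (-(x - t - 0)^2/(2*(a:ℝ)))
        ≤ (√(2*π*(a:ℝ)))⁻¹ * 1 := by
          refine mul_le_mul_of_nonneg_left h1 (by positivity)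
      _ = _ := mul_one _

private lemma agauss_prod_map_add {a b : ℝ≥0} (ha : a ≠ 0) (hb : b ≠ 0) :
    ((gaussianReal 0 a).prod (gaussianReal 0 b)).map (fun p : ℝ × ℝ => p.1 + p.2)
      = gaussianReal 0 (a + b) := by
  have hab : a + b ≠ 0 := by simp [ha]
  ext s hs
  rw [Measure.map_apply measurable_add hs, agauss_prod_eq ha hb,
    withDensity_apply _ (measurable_add hs)]
  have hT : MeasurePreserving (fun z : ℝ × ℝ => (z.1 + z.2, z.2))
      (volume.prod volume) (volume.prod volume) := measurePreserving_add_prod volume volume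
  have hpre : (fun p : ℝ × ℝ => p.1 + p.2) ⁻¹' s
      = (fun z : ℝ × ℝ => (z.1 + z.2, z.2)) ⁻¹' (s ×ˢ (Set.univ : Set ℝ)) := by
    ext z; simp
  have hG : Measurable (fun w : ℝ × ℝ => gaussianPDF 0 a (w.1 - w.2) * gaussianPDF 0 b w.2) :=
    ((measurable_gaussianPDF 0 a).comp (measurable_fst.sub measurable_snd)).mul
      ((measurable_gaussianPDF 0 b).comp measurable_snd)
  calc ∫⁻ z in (fun p : ℝ × ℝ => p.1 + p.2) ⁻¹' s,
        gaussianPDF 0 a z.1 * gaussianPDF 0 b z.2 ∂(volume.prod volume)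
      = ∫⁻ z in (fun z : ℝ × ℝ => (z.1 + z.2, z.2)) ⁻¹' (s ×ˢ Set.univ),
          (fun w : ℝ × ℝ => gaussianPDF 0 a (w.1 - w.2) * gaussianPDF 0 b w.2)
            ((fun z : ℝ × ℝ => (z.1 + z.2, z.2)) z) ∂(volume.prod volume) := by
        rw [← hpre]
        refine setLIntegral_congr_fun ?_ (fun z _ => ?_)
        · rw [hpre]; exact hT.measurable (hs.prod MeasurableSet.univ)
        · simp
    _ = ∫⁻ w in s ×ˢ Set.univ,
          gaussianPDF 0 a (w.1 - w.2) * gaussianPDF 0 b w.2 ∂(volume.prod volume) :=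
        hT.setLIntegral_comp_preimage (hs.prod MeasurableSet.univ) hG
    _ = ∫⁻ x in s, ∫⁻ t, gaussianPDF 0 a (x - t) * gaussianPDF 0 b t := by
        rw [← Measure.restrict_prod_eq_prod_univ, lintegral_prod _ hG.aemeasurable]
    _ = ∫⁻ x in s, gaussianPDF 0 (a + b) x := by
        refine setLIntegral_congr_fun hs (fun x _ => ?_)
        have : ∀ t : ℝ, gaussianPDF 0 a (x - t) * gaussianPDF 0 b t
            = ENNReal.ofReal (gaussianPDFReal 0 a (x - t) * gaussianPDFReal 0 b t) := by
          intro t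
          rw [gaussianPDF, gaussianPDF, ← ENNReal.ofReal_mul (gaussianPDFReal_nonneg _ _ _)]
        simp_rw [this]
        rw [← ofReal_integral_eq_lintegral_ofReal (agauss_integrable_conv x)
          (Filter.Eventually.of_forall fun t =>
            mul_nonneg (gaussianPDFReal_nonneg _ _ _) (gaussianPDFReal_nonneg _ _ _)),
          agauss_pdf_conv ha hb]
        rfl
    _ = gaussianReal 0 (a + b) s := (gaussianReal_apply _ hab s).symm

private lemma agauss_indep_add {Ω : Type*} {m0 : MeasurableSpace Ω} {μ : Measure Ω}
    [IsProbabilityMeasure μ] {X Y : Ω → ℝ} (hX : Measurable X) (hY : Measurable Y)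
    (h : IndepFun X Y μ) {a b : ℝ≥0} (ha : a ≠ 0)
    (hXa : μ.map X = gaussianReal 0 a) (hYb : μ.map Y = gaussianReal 0 b) :
    μ.map (fun ω => X ω + Y ω) = gaussianReal 0 (a + b) := by
  by_cases hb : b = 0
  · subst hb
    have h0 : μ (Y ⁻¹' {0}ᶜ) = 0 := by
      rw [← Measure.map_apply hY (measurableSet_singleton 0).compl, hYb,
        gaussianReal_zero_var]
      simp
    have hY0 : (fun ω => X ω + Y ω) =ᵐ[μ] X := by
      rw [Filter.eventuallyEq_iff_exists_mem]
      refine ⟨Y ⁻¹' {0}, ?_, fun ω hω => ?_⟩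
      · rwa [MeasureTheory.mem_ae_iff]
      · simp only [Set.mem_preimage, Set.mem_singleton_iff] at hω
        simp [hω]
    rw [Measure.map_congr hY0, hXa, add_zero]
  · have hmap : μ.map (fun ω => (X ω, Y ω)) = (gaussianReal 0 a).prod (gaussianReal 0 b) := by
      rw [← hXa, ← hYb]
      exact (indepFun_iff_map_prod_eq_prod_map_map hX.aemeasurable hY.aemeasurable).mp h
    have hcomp : (fun ω => X ω + Y ω)
        = (fun p : ℝ × ℝ => p.1 + p.2) ∘ (fun ω => (X ω, Y ω)) := rfl
    rw [hcomp, ← Measure.map_map measurable_add (hX.prodMk hY), hmap,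
      agauss_prod_map_add ha hb]

private lemma agauss_sum_law {Ω : Type*} {m0 : MeasurableSpace Ω} {μ : Measure Ω}
    [IsProbabilityMeasure μ]
    (z : ℕ → Fin 2 → Ω → ℝ) (hz_meas : ∀ i j, Measurable (z i j))
    (hz_indep : iIndepFun
      (fun p : ℕ × Fin 2 => z p.1 p.2) μ)
    {v : ℝ≥0} (hv : v ≠ 0) (hz_gauss : ∀ i j, Measure.map (z i j) μ = gaussianReal 0 v)
    (j : Fin 2) (s : Finset ℕ) :
    μ.map (fun ω => ∑ i ∈ s, z i j ω) = gaussianReal 0 (s.card • v) := by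
  classical
  induction s using Finset.induction_on with
  | empty =>
      simp only [Finset.sum_empty, Finset.card_empty, zero_smul, gaussianReal_zero_var]
      rw [Measure.map_const]
      simp
  | @insert a s ha ih =>
      have hsum_meas : Measurable (fun ω => ∑ i ∈ s, z i j ω) :=
        Finset.measurable_sum s (fun i _ => hz_meas i j)
      have hindep : IndepFun (z a j) (fun ω => ∑ i ∈ s, z i j ω) μ := by
        have h1 := hz_indep.indepFun_finset_sum_of_notMem
          (fun p => hz_meas p.1 p.2) (s := s ×ˢ ({j} : Finset (Fin 2))) (i := (a, j))
          (by simp [ha])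
        have h2 : (∑ p ∈ s ×ˢ ({j} : Finset (Fin 2)), fun ω => z p.1 p.2 ω)
            = (fun ω => ∑ i ∈ s, z i j ω) := by
          funext ω
          rw [Finset.sum_apply, Finset.sum_product]
          simp
        rw [h2] at h1
        exact h1.symm
      have := agauss_indep_add (hz_meas a j) hsum_meas hindep hv (hz_gauss a j) ih
      rw [show (fun ω => ∑ i ∈ insert a s, z i j ω)
          = (fun ω => z a j ω + ∑ i ∈ s, z i j ω) from funext fun ω => Finset.sum_insert ha,
        this, Finset.card_insert_of_notMem ha, succ_nsmul, add_comm (#s • v) v]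

private lemma agauss_radial_integral {v : ℝ≥0} (hv : v ≠ 0) {R : ℝ} (hR : 0 ≤ R) :
    ∫ r in Set.Ioc 0 R, r * rexp (-r^2/(2*(v:ℝ))) = v * (1 - rexp (-R^2/(2*(v:ℝ)))) := by
  have hV : (0:ℝ) < v := NNReal.coe_pos.mpr (pos_iff_ne_zero.mpr hv)
  have hderiv : ∀ x ∈ Set.uIcc 0 R,
      HasDerivAt (fun r : ℝ => -(v:ℝ) * rexp (-r^2/(2*(v:ℝ))))
        (x * rexp (-x^2/(2*(v:ℝ)))) x := by
    intro x _
    have h1 : HasDerivAt (fun r : ℝ => -r^2/(2*(v:ℝ))) (-(2*x^1)/(2*(v:ℝ))) x :=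
      ((hasDerivAt_pow 2 x).neg).div_const _
    have h2 := (h1.exp).const_mul (-(v:ℝ))
    refine h2.congr_deriv ?_
    field_simp
  have hcont : Continuous (fun r : ℝ => r * rexp (-r^2/(2*(v:ℝ)))) := by fun_prop
  rw [← intervalIntegral.integral_of_le hR,
    intervalIntegral.integral_eq_sub_of_hasDerivAt hderiv
      (hcont.intervalIntegrable 0 R)]
  simp only [ne_eq, OfNat.ofNat_ne_zero, not_false_eq_true, zero_pow, neg_zero, zero_div,
    Real.exp_zero, mul_one]
  ring

private lemma agauss_disk {v : ℝ≥0} (hv : v ≠ 0) {R : ℝ} (hR : 0 ≤ R) :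
    ((gaussianReal 0 v).prod (gaussianReal 0 v)) {p : ℝ × ℝ | p.1^2 + p.2^2 ≤ R^2}
      = ENNReal.ofReal (1 - rexp (-R^2 / (2*(v:ℝ)))) := by
  have hV : (0:ℝ) < v := NNReal.coe_pos.mpr (pos_iff_ne_zero.mpr hv)
  have hpi : (0:ℝ) < π := Real.pi_pos
  set D : Set (ℝ × ℝ) := {p : ℝ × ℝ | p.1^2 + p.2^2 ≤ R^2} with hDdef
  have hD : MeasurableSet D := by
    apply measurableSet_le (by fun_prop) measurable_const
  set f : ℝ × ℝ → ℝ := fun p => gaussianPDFReal 0 v p.1 * gaussianPDFReal 0 v p.2 with hfdef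
  have hfnn : ∀ p, 0 ≤ f p := fun p =>
    mul_nonneg (gaussianPDFReal_nonneg _ _ _) (gaussianPDFReal_nonneg _ _ _)
  have hint : Integrable f (volume.prod volume) :=
    (integrable_gaussianPDFReal 0 v).mul_prod (integrable_gaussianPDFReal 0 v)
  rw [agauss_prod_eq hv hv, withDensity_apply _ hD]
  have h1 : (fun z : ℝ × ℝ => gaussianPDF 0 v z.1 * gaussianPDF 0 v z.2)
      = fun z => ENNReal.ofReal (f z) := funext fun z => by
    rw [gaussianPDF, gaussianPDF, ← ENNReal.ofReal_mul (gaussianPDFReal_nonneg _ _ _)]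
  rw [h1, ← ofReal_integral_eq_lintegral_ofReal hint.integrableOn
    (Filter.Eventually.of_forall fun p => hfnn p)]
  congr 1
  rw [← integral_indicator hD, ← Measure.volume_eq_prod,
    ← integral_comp_polarCoord_symm (D.indicator f)]
  have hcong : ∀ p ∈ polarCoord.target,
      p.1 • (D.indicator f) (polarCoord.symm p)
        = ((Set.Iic R).indicator (fun r => r * ((2*π*(v:ℝ))⁻¹ * rexp (-r^2/(2*(v:ℝ))))) p.1)
          * (fun _ : ℝ => (1:ℝ)) p.2 := by
    rintro ⟨r, θ⟩ hp
    simp only [polarCoord, OpenPartialHomeomorph.coe_mk_symm, PartialEquiv.coe_symm_mk] at hp ⊢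
    obtain ⟨hr, hθ⟩ : r ∈ Set.Ioi (0:ℝ) ∧ θ ∈ Set.Ioo (-π) π := by
      simpa [Set.mem_prod] using hp
    have hid : (r * cos θ)^2 + (r * sin θ)^2 = r^2 := by
      have h := sin_sq_add_cos_sq θ
      linear_combination r^2 * h
    have hr0 : 0 < r := Set.mem_Ioi.mp hr
    have hmem : ((r * cos θ, r * sin θ) : ℝ × ℝ) ∈ D ↔ r ∈ Set.Iic R := by
      simp only [hDdef, Set.mem_setOf_eq, Set.mem_Iic, hid]
      constructor
      · intro h
        exact le_of_pow_le_pow_left₀ two_ne_zero hR h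
      · intro h
        exact pow_le_pow_left₀ hr0.le h 2
    have hval : f (r * cos θ, r * sin θ) = (2*π*(v:ℝ))⁻¹ * rexp (-r^2/(2*(v:ℝ))) := by
      simp only [hfdef, gaussianPDFReal, sub_zero]
      rw [show (√(2*π*(v:ℝ)))⁻¹ * rexp (-(r * cos θ)^2/(2*(v:ℝ)))
          * ((√(2*π*(v:ℝ)))⁻¹ * rexp (-(r * sin θ)^2/(2*(v:ℝ))))
          = ((√(2*π*(v:ℝ)))⁻¹ * (√(2*π*(v:ℝ)))⁻¹)
            * (rexp (-(r * cos θ)^2/(2*(v:ℝ))) * rexp (-(r * sin θ)^2/(2*(v:ℝ)))) from by ring,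
        ← mul_inv, Real.mul_self_sqrt (by positivity), ← Real.exp_add]
      congr 2
      have h := sin_sq_add_cos_sq θ
      field_simp
      linear_combination (-1) * h
    by_cases hmem2 : r ∈ Set.Iic R
    · rw [Set.indicator_of_mem (hmem.mpr hmem2), Set.indicator_of_mem hmem2, hval]
      simp only [smul_eq_mul, mul_one]
    · rw [Set.indicator_of_notMem (fun hc => hmem2 (hmem.mp hc)),
        Set.indicator_of_notMem hmem2]
      simp
  rw [setIntegral_congr_fun (polarCoord.open_target.measurableSet) hcong]
  rw [show polarCoord.target = Set.Ioi (0:ℝ) ×ˢ Set.Ioo (-π) π from rfl]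
  rw [Measure.volume_eq_prod]
  rw [setIntegral_prod_mul ((Set.Iic R).indicator
      (fun r => r * ((2*π*(v:ℝ))⁻¹ * rexp (-r^2/(2*(v:ℝ)))))) (fun _ : ℝ => (1:ℝ))
      (Set.Ioi 0) (Set.Ioo (-π) π)]
  rw [setIntegral_indicator measurableSet_Iic, Set.Ioi_inter_Iic]
  simp only [integral_const, Measure.restrict_apply_univ, smul_eq_mul, mul_one,
    Real.volume_Ioo]
  have hsplit : ∀ r : ℝ, r * ((2*π*(v:ℝ))⁻¹ * rexp (-r^2/(2*(v:ℝ))))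
      = (2*π*(v:ℝ))⁻¹ * (r * rexp (-r^2/(2*(v:ℝ)))) := fun r => by ring
  simp_rw [hsplit]
  rw [integral_const_mul, agauss_radial_integral hv hR, measureReal_restrict_apply_univ,
    Real.volume_real_Ioo_of_le (by linarith)]
  field_simp
  ring

private lemma agauss_card_odd (d : ℕ) :
    #(Finset.univ.filter (fun j : Fin d => (j:ℕ) % 2 = 1)) = d / 2 := by
  rw [Finset.card_filter, Fin.sum_univ_eq_sum_range (fun i => if i % 2 = 1 then 1 else 0) d,
    ← Finset.card_filter, ← Nat.card_multiples d 2]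
  congr 1
  apply Finset.filter_congr
  intro x _
  omega

end AuxAveragedGaussian

open scoped ENNReal NNReal

/-- Tightness example: with `d` even, `wᵢ` built from i.i.d. 2-dimensional Gaussians
`zᵢ ~ N(0, (σ̄²/d) I₂)` by repeating the two coordinates over odd/even indices, the
average `y_k = (1/(k+1)) ∑_{i=1}^k wᵢ` satisfies
`P(‖y_k‖₂ ≤ σ̄√(k log(1/δ))/(k+1)) ≤ 1 - δ`. -/
theorem averaged_gaussian_lower_bound {Ω : Type*} {m0 : MeasurableSpace Ω}
    {μ : Measure Ω} [IsProbabilityMeasure μ]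
    {d : ℕ} (hd : 0 < d) (hd_even : Even d)
    (σ : ℝ) (hσ : 0 < σ)
    (z : ℕ → Fin 2 → Ω → ℝ)
    (hz_meas : ∀ i j, Measurable (z i j))
    (hz_indep : iIndepFun
      (fun p : ℕ × Fin 2 => z p.1 p.2) μ)
    (hz_gauss : ∀ i j, Measure.map (z i j) μ = gaussianReal 0 ((σ ^ 2 / d).toNNReal))
    (w : ℕ → Ω → EuclideanSpace ℝ (Fin d))
    (hw : ∀ i ω (j : Fin d), w i ω j = if (j : ℕ) % 2 = 1 then z i 0 ω else z i 1 ω)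
    (y : ℕ → Ω → EuclideanSpace ℝ (Fin d))
    (hy : ∀ k ω, y k ω = ((k : ℝ) + 1)⁻¹ • ∑ i ∈ Finset.Icc 1 k, w i ω) :
    ∀ k : ℕ, 1 ≤ k → ∀ δ : ℝ, 0 < δ → δ < 1 →
      μ {ω | ‖y k ω‖ ≤ σ * Real.sqrt ((k : ℝ) * Real.log (1 / δ)) / ((k : ℝ) + 1)} ≤
        ENNReal.ofReal (1 - δ) := by
  intro k hk δ hδ0 hδ1
  classical
  set v : ℝ≥0 := (σ ^ 2 / d).toNNReal with hvdef
  have hdposR : (0:ℝ) < d := Nat.cast_pos.mpr hd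
  have hvpos : (0:ℝ) < σ^2 / d := by positivity
  have hv : v ≠ 0 := by
    intro h
    rw [hvdef, Real.toNNReal_eq_zero] at h
    linarith
  set S : Fin 2 → Ω → ℝ := fun j ω => ∑ i ∈ Finset.Icc 1 k, z i j ω with hSdef
  have hSmeas : ∀ j, Measurable (S j) :=
    fun j => Finset.measurable_sum _ (fun i _ => hz_meas i j)
  have hcard : (Finset.Icc 1 k).card = k := by rw [Nat.card_Icc]; omega
  have hSlaw : ∀ j, μ.map (S j) = gaussianReal 0 (k • v) := by
    intro j
    have := agauss_sum_law z hz_meas hz_indep hv (fun i j => hz_gauss i j) j (Finset.Icc 1 k)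
    rwa [hcard] at this
  have hkR : (0:ℝ) < k := by exact_mod_cast hk
  have hvco : ((k • v : ℝ≥0) : ℝ) = k * (σ^2/(d:ℝ)) := by
    push_cast
    rw [Real.coe_toNNReal _ hvpos.le]
    exact nsmul_eq_mul _ _
  have hkv : (k • v : ℝ≥0) ≠ 0 := by
    intro h
    have : ((k • v : ℝ≥0) : ℝ) = 0 := by rw [h]; simp
    rw [hvco] at this
    nlinarith
  -- independence of the two coordinate sums
  have hSindep : IndepFun (S 0) (S 1) μ := by
    have hdisj : Disjoint ((Finset.Icc 1 k) ×ˢ ({0} : Finset (Fin 2)))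
        ((Finset.Icc 1 k) ×ˢ ({1} : Finset (Fin 2))) := by
      rw [Finset.disjoint_left]
      rintro ⟨i, j⟩ h1 h2
      simp only [Finset.mem_product, Finset.mem_singleton] at h1 h2
      rw [h1.2] at h2
      exact absurd h2.2 (by decide)
    have h := hz_indep.indepFun_finset _ _ hdisj (fun p => hz_meas p.1 p.2)
    have hg0 : Measurable
        (fun f : (↥((Finset.Icc 1 k) ×ˢ ({0} : Finset (Fin 2))) → ℝ) => ∑ i, f i) :=
      Finset.measurable_sum Finset.univ (fun i _ => measurable_pi_apply i)
    have hg1 : Measurable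
        (fun f : (↥((Finset.Icc 1 k) ×ˢ ({1} : Finset (Fin 2))) → ℝ) => ∑ i, f i) :=
      Finset.measurable_sum Finset.univ (fun i _ => measurable_pi_apply i)
    have h2 := h.comp hg0 hg1
    have e0 : ((fun f : (↥((Finset.Icc 1 k) ×ˢ ({0} : Finset (Fin 2))) → ℝ) => ∑ i, f i)
        ∘ (fun a (i : ↥((Finset.Icc 1 k) ×ˢ ({0} : Finset (Fin 2)))) => z (i : ℕ × Fin 2).1 (i : ℕ × Fin 2).2 a))
        = S 0 := by
      funext a
      simp only [Function.comp_apply]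
      rw [Finset.sum_coe_sort ((Finset.Icc 1 k) ×ˢ ({0} : Finset (Fin 2)))
        (fun p => z p.1 p.2 a), Finset.sum_product]
      simp [hSdef]
    have e1 : ((fun f : (↥((Finset.Icc 1 k) ×ˢ ({1} : Finset (Fin 2))) → ℝ) => ∑ i, f i)
        ∘ (fun a (i : ↥((Finset.Icc 1 k) ×ˢ ({1} : Finset (Fin 2)))) => z (i : ℕ × Fin 2).1 (i : ℕ × Fin 2).2 a))
        = S 1 := by
      funext a
      simp only [Function.comp_apply]
      rw [Finset.sum_coe_sort ((Finset.Icc 1 k) ×ˢ ({1} : Finset (Fin 2)))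
        (fun p => z p.1 p.2 a), Finset.sum_product]
      simp [hSdef]
    rwa [e0, e1] at h2
  have hpair : μ.map (fun ω => (S 0 ω, S 1 ω))
      = (gaussianReal 0 (k • v)).prod (gaussianReal 0 (k • v)) := by
    refine ((indepFun_iff_map_prod_eq_prod_map_map
      (hSmeas 0).aemeasurable (hSmeas 1).aemeasurable).mp hSindep).trans ?_
    rw [hSlaw 0, hSlaw 1]
  -- constants
  set L := Real.log (1/δ) with hLdef
  have hL : 0 ≤ L := Real.log_nonneg (by rw [le_div_iff₀ hδ0]; linarith)
  obtain ⟨t, ht⟩ := hd_even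
  set m := d / 2 with hmdef
  have hdm : d = 2 * m := by omega
  have hm0 : 0 < m := by omega
  have hmR : (0:ℝ) < m := Nat.cast_pos.mpr hm0
  set R2 : ℝ := σ^2 * ((k:ℝ) * L) / m with hR2def
  have hR2 : 0 ≤ R2 := by positivity
  have hRsq : (Real.sqrt R2)^2 = R2 := Real.sq_sqrt hR2
  -- coordinates of the sum
  have hWcoord : ∀ ω (j : Fin d), (∑ i ∈ Finset.Icc 1 k, w i ω) j
      = if (j:ℕ) % 2 = 1 then S 0 ω else S 1 ω := by
    intro ω j
    rw [WithLp.ofLp_sum, Finset.sum_apply]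
    by_cases hj : (j:ℕ) % 2 = 1 <;> simp [hw, hj, hSdef]
  have hQ : ∀ ω, (∑ j : Fin d, ((∑ i ∈ Finset.Icc 1 k, w i ω) j)^2)
      = (m:ℝ) * ((S 0 ω)^2 + (S 1 ω)^2) := by
    intro ω
    simp_rw [hWcoord ω]
    have hsq : ∀ j : Fin d, (if (j:ℕ) % 2 = 1 then S 0 ω else S 1 ω)^2
        = if (j:ℕ) % 2 = 1 then (S 0 ω)^2 else (S 1 ω)^2 := fun j => by
      split_ifs <;> rfl
    simp_rw [hsq]
    rw [Finset.sum_ite, Finset.sum_const, Finset.sum_const]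
    have hc1 : #(Finset.univ.filter (fun j : Fin d => (j:ℕ) % 2 = 1)) = m :=
      agauss_card_odd d
    have hc2 : #(Finset.univ.filter (fun j : Fin d => ¬ ((j:ℕ) % 2 = 1))) = m := by
      have := Finset.card_filter_add_card_filter_not
        (s := (Finset.univ : Finset (Fin d))) (p := fun j : Fin d => (j:ℕ) % 2 = 1)
      rw [Finset.card_univ, Fintype.card_fin, hc1] at this
      omega
    rw [hc1, hc2, nsmul_eq_mul, nsmul_eq_mul]
    ring
  -- the event, rewritten
  have hiff : ∀ ω, (‖y k ω‖ ≤ σ * Real.sqrt ((k:ℝ) * L) / ((k:ℝ)+1))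
      ↔ ((S 0 ω)^2 + (S 1 ω)^2 ≤ (Real.sqrt R2)^2) := by
    intro ω
    have hk1 : (0:ℝ) < (k:ℝ) + 1 := by positivity
    rw [hy k ω, norm_smul, Real.norm_eq_abs, abs_of_pos (inv_pos.mpr hk1),
      div_eq_inv_mul, mul_le_mul_iff_right₀ (inv_pos.mpr hk1), EuclideanSpace.norm_eq]
    simp_rw [Real.norm_eq_abs, sq_abs]
    rw [hQ ω, hRsq]
    have hkL : (0:ℝ) ≤ (k:ℝ) * L := by positivity
    constructor
    · intro h
      have h2 := pow_le_pow_left₀ (Real.sqrt_nonneg _) h 2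
      rw [Real.sq_sqrt (by positivity), mul_pow, Real.sq_sqrt hkL] at h2
      rw [hR2def, le_div_iff₀ hmR]
      nlinarith
    · intro h
      rw [hR2def, le_div_iff₀ hmR] at h
      have h2 : (m:ℝ) * ((S 0 ω)^2 + (S 1 ω)^2) ≤ σ^2 * ((k:ℝ) * L) := by nlinarith
      calc Real.sqrt ((m:ℝ) * ((S 0 ω)^2 + (S 1 ω)^2))
          ≤ Real.sqrt (σ^2 * ((k:ℝ) * L)) := Real.sqrt_le_sqrt h2
        _ = σ * Real.sqrt ((k:ℝ) * L) := by
            rw [Real.sqrt_mul (sq_nonneg σ), Real.sqrt_sq hσ.le]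
  have hDmeas : MeasurableSet {p : ℝ × ℝ | p.1^2 + p.2^2 ≤ (Real.sqrt R2)^2} :=
    measurableSet_le (by fun_prop) measurable_const
  have hEv : {ω | ‖y k ω‖ ≤ σ * Real.sqrt ((k:ℝ) * L) / ((k:ℝ)+1)}
      = (fun ω => (S 0 ω, S 1 ω)) ⁻¹' {p : ℝ × ℝ | p.1^2 + p.2^2 ≤ (Real.sqrt R2)^2} := by
    ext ω
    exact hiff ω
  rw [hEv, ← Measure.map_apply ((hSmeas 0).prodMk (hSmeas 1)) hDmeas, hpair,
    agauss_disk hkv (Real.sqrt_nonneg _)]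
  have hexp : -(Real.sqrt R2)^2 / (2*((k • v : ℝ≥0):ℝ)) = Real.log δ := by
    rw [hRsq, hR2def, hvco, hdm]
    have hL2 : L = - Real.log δ := by rw [hLdef, one_div, Real.log_inv]
    push_cast
    rw [hL2]
    have hσ2 : σ^2 ≠ 0 := by positivity
    have hm' : (m:ℝ) ≠ 0 := ne_of_gt hmR
    have hk' : (k:ℝ) ≠ 0 := ne_of_gt hkR
    field_simp
  rw [hexp, Real.exp_log hδ0]
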